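/- Let F : ℂ → ℂ be defined by F(z) = 2z if |z| < 1 and F(z) = (2/3)z if |z| ≥ 1. Then F has no periodic points other than 0: for every z ∈ ℂ with z ≠ 0 and every n ≥ 1, the n-th iterate satisfies F^[n](z) ≠ z. -/

import Mathlib

open Complex

/-- Section 2.6: the piecewise conformal map `F(z) = 2z` for `|z| < 1`,
`F(z) = (2/3)z` for `|z| ≥ 1` has no periodic points other than `0`. -/
theorem no_periodic_points
    (F : ℂ → ℂ)
    (hF : ∀ z : ℂ, F z = if ‖z‖ < 1 then 2 * z else (2 / 3) * z)
    (z : ℂ) (hz : z ≠ 0) (n : ℕ) (hn : 1 ≤ n) :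
    F^[n] z ≠ z := by
  have key : ∀ m : ℕ, ∃ i j : ℕ, i + j = m ∧
      ‖F^[m] z‖ = 2 ^ i * (2 / 3 : ℝ) ^ j * ‖z‖ := by
    intro m
    induction m with
    | zero => exact ⟨0, 0, rfl, by simp⟩
    | succ m ih =>
      obtain ⟨i, j, hij, habs⟩ := ih
      rw [Function.iterate_succ_apply', hF]
      by_cases h : ‖F^[m] z‖ < 1
      · refine ⟨i + 1, j, by omega, ?_⟩
        rw [if_pos h, norm_mul, habs]
        simp [pow_succ]; ring
      · refine ⟨i, j + 1, by omega, ?_⟩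
        rw [if_neg h, norm_mul, habs]
        have : ‖(2 / 3 : ℂ)‖ = (2 / 3 : ℝ) := by
          rw [norm_div]; norm_num
        rw [this]
        rw [pow_succ]; ring
  intro hper
  obtain ⟨i, j, hij, habs⟩ := key n
  rw [hper] at habs
  have hz' : ‖z‖ ≠ 0 := by simpa using hz
  have h1 : (2 : ℝ) ^ i * (2 / 3 : ℝ) ^ j = 1 := by
    have h := habs.symm
    have h' : 2 ^ i * (2 / 3 : ℝ) ^ j * ‖z‖ = 1 * ‖z‖ := by
      rw [h]; ring
    exact mul_right_cancel₀ hz' h'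
  have h2 : (2 : ℝ) ^ (i + j) = 3 ^ j := by
    have h3 : (0:ℝ) < 3 ^ j := by positivity
    rw [pow_add]
    rw [div_pow, ← mul_div_assoc, div_eq_one_iff_eq h3.ne'] at h1
    linarith
  have h2' : (2 : ℕ) ^ (i + j) = 3 ^ j := by
    exact_mod_cast h2
  rw [hij] at h2'
  have heven : Even ((2:ℕ) ^ n) := by
    exact (Nat.even_pow' (by omega)).mpr even_two
  rw [h2'] at heven
  rw [Nat.even_pow] at heven
  exact absurd heven.1 (by decide)
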